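/- Equality case of the core inequality: under the hypotheses that p is a probability density on [0,1], v: [0,1] → [0,∞) is measurable with ∫₀¹ v(c) p(c) dc = 1, and φ': [0,1] → (0,∞) satisfies ∫₀¹ φ'(c) v(c) p(c) dc = 1, equality ∫₀¹ (1/φ'(c)²) v(c) p(c) dc = 1 forces φ'(c) = 1 for almost every c with respect to the measure v(c)p(c)dc; in particular, if v·p is almost everywhere positive on [0,1] and φ' is continuous, then φ is the identity (φ linear with slope 1). -/

import Mathlib

open MeasureTheory Set

/-- **Equality case of the core inequality.**  Under the hypotheses that `p` is a
probability density on `[0,1]`, `v : [0,1] → [0,∞)` is measurable with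
`∫₀¹ v(c) p(c) dc = 1`, and `φ'` (the positive derivative of a strictly increasing
`φ : [0,1] → [0,1]` with `φ(0) = 0`, `φ(1) = 1`) satisfies
`∫₀¹ φ'(c) v(c) p(c) dc = 1`, the equality `∫₀¹ (1/φ'(c)²) v(c) p(c) dc = 1` forces
`φ'(c) = 1` for almost every `c` with respect to the measure `v(c) p(c) dc`; in
particular, if `v ⬝ p` is almost everywhere positive on `[0,1]` and `φ'` is continuous,
then `φ` is the identity. -/
theorem equality_case_core_inequality
    (φ p v φ' : ℝ → ℝ)
    (hpmeas : Measurable p) (hpnonneg : ∀ c, 0 ≤ p c)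
    (hpden : ∫ c in (0 : ℝ)..1, p c = 1)
    (hvmeas : Measurable v) (hvnonneg : ∀ c, 0 ≤ v c)
    (hφ'meas : Measurable φ') (hφ'pos : ∀ c, 0 < φ' c)
    (hφderiv : ∀ c ∈ Icc (0 : ℝ) 1, HasDerivAt φ (φ' c) c)
    (hφmono : StrictMonoOn φ (Icc 0 1)) (hφmaps : MapsTo φ (Icc 0 1) (Icc 0 1))
    (hφ0 : φ 0 = 0) (hφ1 : φ 1 = 1)
    (hvp : ∫ c in (0 : ℝ)..1, v c * p c = 1)
    (hφ'vp : ∫ c in (0 : ℝ)..1, φ' c * v c * p c = 1)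
    (hint1 : IntervalIntegrable (fun c => 1 / (φ' c) ^ 2 * v c * p c) volume 0 1)
    (hint2 : IntervalIntegrable (fun c => 1 / φ' c * v c * p c) volume 0 1)
    (heq : ∫ c in (0 : ℝ)..1, 1 / (φ' c) ^ 2 * v c * p c = 1) :
    (∀ᵐ c ∂((volume.restrict (Icc (0 : ℝ) 1)).withDensity
        (fun c => ENNReal.ofReal (v c * p c))), φ' c = 1) ∧
      ((∀ᵐ c ∂(volume.restrict (Icc (0 : ℝ) 1)), 0 < v c * p c) →
        Continuous φ' → ∀ c ∈ Icc (0 : ℝ) 1, φ c = c) := by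
  have h01 : (0 : ℝ) ≤ 1 := zero_le_one
  rw [intervalIntegral.integral_of_le h01] at hvp hφ'vp heq
  -- integrability of the four building blocks on `Ioc 0 1`
  have hiw : IntegrableOn (fun c => v c * p c) (Ioc (0:ℝ) 1) volume := by
    by_contra h
    rw [MeasureTheory.integral_undef h] at hvp; norm_num at hvp
  have hiφ'w : IntegrableOn (fun c => φ' c * v c * p c) (Ioc (0:ℝ) 1) volume := by
    by_contra h
    rw [MeasureTheory.integral_undef h] at hφ'vp; norm_num at hφ'vp
  have hi1 : IntegrableOn (fun c => 1 / (φ' c) ^ 2 * v c * p c) (Ioc (0:ℝ) 1) volume :=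
    hint1.1
  have hi2 : IntegrableOn (fun c => 1 / φ' c * v c * p c) (Ioc (0:ℝ) 1) volume :=
    hint2.1
  set A : ℝ := ∫ c in Ioc (0:ℝ) 1, 1 / φ' c * v c * p c with hA
  -- first application of Cauchy-Schwarz / AM-GM: A ≥ 1
  have hA1 : 1 ≤ A := by
    have h0 : 0 ≤ ∫ c in Ioc (0:ℝ) 1,
        (1 / φ' c * v c * p c - 2 * (v c * p c) + φ' c * v c * p c) := by
      apply setIntegral_nonneg measurableSet_Ioc
      intro c _
      have hc := hφ'pos c
      have key : 1 / φ' c * v c * p c - 2 * (v c * p c) + φ' c * v c * p c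
          = (1 / φ' c - 1) ^ 2 * φ' c * (v c * p c) := by
        field_simp
        ring
      rw [key]
      have := hvnonneg c
      have := hpnonneg c
      positivity
    have hd : IntegrableOn (fun c => 1 / φ' c * v c * p c - 2 * (v c * p c))
        (Ioc (0:ℝ) 1) volume := hi2.sub (hiw.const_mul 2)
    rw [integral_add hd hiφ'w,
      integral_sub hi2 (hiw.const_mul 2), integral_const_mul 2 _, hvp, hφ'vp] at h0
    simp only [← hA] at h0
    linarith
  -- second application: A ≤ 1, with the integrand being the perfect square
  have hsq : ∀ c, 1 / (φ' c) ^ 2 * v c * p c - 2 * (1 / φ' c * v c * p c) + v c * p c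
      = (1 / φ' c - 1) ^ 2 * (v c * p c) := by
    intro c
    have hc := (hφ'pos c).ne'
    field_simp
    ring
  have hisq : IntegrableOn
      (fun c => 1 / (φ' c) ^ 2 * v c * p c - 2 * (1 / φ' c * v c * p c) + v c * p c)
      (Ioc (0:ℝ) 1) volume := (hi1.sub (hi2.const_mul 2)).add hiw
  have hval : ∫ c in Ioc (0:ℝ) 1,
      (1 / (φ' c) ^ 2 * v c * p c - 2 * (1 / φ' c * v c * p c) + v c * p c)
      = 1 - 2 * A + 1 := by
    have hd2 : IntegrableOn (fun c => 1 / (φ' c) ^ 2 * v c * p c - 2 * (1 / φ' c * v c * p c))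
        (Ioc (0:ℝ) 1) volume := hi1.sub (hi2.const_mul 2)
    rw [integral_add hd2 hiw,
      integral_sub hi1 (hi2.const_mul 2), integral_const_mul 2 _, heq, hvp, ← hA]
  have hA2 : A ≤ 1 := by
    have h0 : 0 ≤ ∫ c in Ioc (0:ℝ) 1,
        (1 / (φ' c) ^ 2 * v c * p c - 2 * (1 / φ' c * v c * p c) + v c * p c) := by
      apply setIntegral_nonneg measurableSet_Ioc
      intro c _
      rw [hsq c]
      have := hvnonneg c
      have := hpnonneg c
      positivity
    rw [hval] at h0
    linarith
  have hAeq : A = 1 := le_antisymm hA2 hA1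
  -- the nonnegative integrand has integral zero, hence vanishes a.e.
  have hzero : (fun c => 1 / (φ' c) ^ 2 * v c * p c - 2 * (1 / φ' c * v c * p c) + v c * p c)
      =ᵐ[volume.restrict (Ioc (0:ℝ) 1)] 0 := by
    rw [← MeasureTheory.integral_eq_zero_iff_of_nonneg _ hisq]
    · rw [hval, hAeq]; ring
    · intro c
      simp only [Pi.zero_apply]
      show (0:ℝ) ≤ 1 / (φ' c) ^ 2 * v c * p c - 2 * (1 / φ' c * v c * p c) + v c * p c
      rw [hsq c]
      have := hvnonneg c
      have := hpnonneg c
      positivity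
  have hrestr : volume.restrict (Icc (0:ℝ) 1) = volume.restrict (Ioc (0:ℝ) 1) :=
    (Measure.restrict_congr_set Ioc_ae_eq_Icc).symm
  -- a.e. on `[0,1]`: if the weight is nonzero then φ' = 1
  have hae : ∀ᵐ c ∂(volume.restrict (Icc (0:ℝ) 1)), v c * p c ≠ 0 → φ' c = 1 := by
    rw [hrestr]
    filter_upwards [hzero] with c hc hcw
    rw [Pi.zero_apply, hsq c] at hc
    have hsq0 : (1 / φ' c - 1) ^ 2 = 0 := by
      rcases mul_eq_zero.1 hc with h | h
      · exact h
      · exact absurd h hcw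
    have h1 : 1 / φ' c = 1 := by
      have := pow_eq_zero_iff (n := 2) (by norm_num) |>.1 hsq0
      linarith [sub_eq_zero.1 this]
    have hcpos := (hφ'pos c).ne'
    field_simp at h1
    linarith
  constructor
  · -- first conclusion
    rw [ae_withDensity_iff (show Measurable fun c => ENNReal.ofReal (v c * p c) from
      (hvmeas.mul hpmeas).ennreal_ofReal)]
    filter_upwards [hae] with c hc hne
    apply hc
    intro h0
    rw [h0] at hne
    simp at hne
  · -- second conclusion
    intro hpos hcont
    have hae1 : ∀ᵐ c ∂(volume.restrict (Icc (0:ℝ) 1)), φ' c = 1 := by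
      filter_upwards [hae, hpos] with c h1 h2
      exact h1 h2.ne'
    -- φ' = 1 everywhere on [0,1] by continuity
    have hall : ∀ c ∈ Icc (0:ℝ) 1, φ' c = 1 := by
      intro c hc
      by_contra hne
      have hopen : IsOpen {x : ℝ | φ' x ≠ 1} := isOpen_ne_fun hcont continuous_const
      rcases Metric.isOpen_iff.1 hopen c hne with ⟨ε, hε, hball⟩
      obtain ⟨a, b, hab, hsub⟩ : ∃ a b : ℝ, a < b ∧
          Ioo a b ⊆ {x : ℝ | φ' x ≠ 1} ∩ Icc 0 1 := by
        rcases lt_or_eq_of_le hc.2 with h1 | h1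
        · refine ⟨c, min (c + ε) 1, lt_min (by linarith) h1, fun x hx => ?_⟩
          have hx1 := hx.1
          have hx2 := lt_of_lt_of_le hx.2 (min_le_left _ _)
          have hx3 := lt_of_lt_of_le hx.2 (min_le_right _ _)
          refine ⟨hball ?_, ⟨le_of_lt (lt_of_le_of_lt hc.1 hx1), hx3.le⟩⟩
          rw [Metric.mem_ball, Real.dist_eq, abs_of_pos (by linarith)]
          linarith
        · refine ⟨max (c - ε) 0, c, max_lt (by linarith) (by rw [h1]; norm_num),
            fun x hx => ?_⟩
          have hx1 := lt_of_le_of_lt (le_max_left _ _) hx.1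
          have hx2 := lt_of_le_of_lt (le_max_right _ _) hx.1
          have hx3 := hx.2
          refine ⟨hball ?_, ⟨hx2.le, le_of_lt (lt_of_lt_of_le hx3 hc.2)⟩⟩
          rw [Metric.mem_ball, Real.dist_eq, abs_of_neg (by linarith)]
          linarith
      have hnull : volume.restrict (Icc (0:ℝ) 1) {x : ℝ | ¬ φ' x = 1} = 0 := hae1
      rw [Measure.restrict_apply' measurableSet_Icc] at hnull
      have : volume (Ioo a b) = 0 :=
        measure_mono_null (fun x hx => Set.mem_inter (hsub hx).1 (hsub hx).2) hnull
      rw [Real.volume_Ioo] at this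
      exact absurd this (by simp [hab, sub_pos.2 hab])
    -- integrate: φ and id have the same right derivative on [0,1]
    intro c hc
    have key : ∀ y ∈ Icc (0:ℝ) 1, φ y = id y := by
      apply eq_of_has_deriv_right_eq (f' := fun x => (1:ℝ))
      · intro x hx
        have := (hφderiv x ⟨hx.1, hx.2.le⟩).hasDerivWithinAt (s := Ici x)
        rwa [hall x ⟨hx.1, hx.2.le⟩] at this
      · intro x hx
        exact (hasDerivAt_id x).hasDerivWithinAt
      · intro x hx
        exact ((hφderiv x hx).continuousAt).continuousWithinAt
      · exact continuous_id.continuousOn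
      · simpa using hφ0
    simpa using key c hc
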